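/- Let A ⊆ ℝⁿ be a non-empty, bounded, Lebesgue-measurable set whose boundary ∂A is contained in a compact d-set for some 0 ≤ d < n. Then for every t with 0 ≤ t < n − d, the integral ∫_A dist(y,∂A)^{−t} dy is finite. -/

import Mathlib

open Metric MeasureTheory Set
open scoped ENNReal

lemma hausFin {n : ℕ} {d : ℝ} {B : Set (EuclideanSpace ℝ (Fin n))}
    (hB : IsCompact B) {c₂ : ℝ}
    (hup : ∀ x ∈ B, μH[d] (B ∩ Metric.closedBall x 1) ≤ ENNReal.ofReal (c₂ * 1 ^ d)) :
    μH[d] B < ⊤ := by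
  obtain ⟨s, hcov⟩ := hB.elim_finite_subcover (fun x : B => Metric.ball (x : _) 1)
    (fun x => isOpen_ball) (fun y hy => Set.mem_iUnion.2 ⟨⟨y, hy⟩, by simp⟩)
  have hBeq : B ⊆ ⋃ x ∈ s, B ∩ Metric.closedBall (x : _) 1 := by
    intro y hy
    obtain ⟨x, hxs, hx⟩ := Set.mem_iUnion₂.1 (hcov hy)
    exact Set.mem_iUnion₂.2 ⟨x, hxs, hy, ball_subset_closedBall hx⟩
  calc μH[d] B ≤ μH[d] (⋃ x ∈ s, B ∩ Metric.closedBall (x : _) 1) := measure_mono hBeq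
    _ ≤ ∑ x ∈ s, μH[d] (B ∩ Metric.closedBall (x : _) 1) := measure_biUnion_finset_le _ _
    _ ≤ ∑ x ∈ s, ENNReal.ofReal (c₂ * 1 ^ d) := Finset.sum_le_sum (fun x _ => hup x x.2)
    _ < ⊤ := by
        rw [Finset.sum_const, nsmul_eq_mul]
        exact ENNReal.mul_lt_top (by simp) ENNReal.ofReal_lt_top

lemma netExists {n : ℕ} {d : ℝ} {B : Set (EuclideanSpace ℝ (Fin n))}
    (hBmeas : MeasurableSet B) {c₁ : ℝ} (hc₁ : 0 < c₁)
    (hlow : ∀ x ∈ B, ∀ r : ℝ, 0 < r → r ≤ 1 →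
      ENNReal.ofReal (c₁ * r ^ d) ≤ μH[d] (B ∩ Metric.closedBall x r))
    (hHB : μH[d] B ≠ ⊤) {r : ℝ} (hr0 : 0 < r) (hr1 : r ≤ 1) :
    ∃ S : Finset (EuclideanSpace ℝ (Fin n)), ↑S ⊆ B ∧
      (∀ b ∈ B, ∃ x ∈ S, dist b x ≤ r) ∧
      (S.card : ℝ≥0∞) * ENNReal.ofReal (c₁ * (r / 2) ^ d) ≤ μH[d] B := by
  classical
  set e : ℝ≥0∞ := ENNReal.ofReal (c₁ * (r / 2) ^ d) with he
  have hepos : 0 < e := by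
    rw [he]
    exact ENNReal.ofReal_pos.2 (by positivity)
  -- any separated finset has the measure bound
  have key : ∀ S : Finset (EuclideanSpace ℝ (Fin n)), ↑S ⊆ B →
      ((S : Set (EuclideanSpace ℝ (Fin n))).Pairwise fun x y => r < dist x y) →
      (S.card : ℝ≥0∞) * e ≤ μH[d] B := by
    intro S hSB hsep
    have hdisj : (S : Set (EuclideanSpace ℝ (Fin n))).PairwiseDisjoint
        (fun x => B ∩ Metric.closedBall x (r / 2)) := by
      intro x hx y hy hxy
      refine Set.disjoint_left.2 fun z hz hz' => ?_
      have h1 : dist x y ≤ dist x z + dist z y := dist_triangle _ _ _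
      have h2 : dist x z ≤ r / 2 := by
        have := hz.2; rwa [Metric.mem_closedBall, dist_comm] at this
      have h3 : dist z y ≤ r / 2 := hz'.2
      have := hsep hx hy hxy
      linarith
    have hmeas : ∀ x ∈ S, MeasurableSet (B ∩ Metric.closedBall x (r / 2)) :=
      fun x _ => hBmeas.inter measurableSet_closedBall
    have hsum : μH[d] (⋃ x ∈ S, B ∩ Metric.closedBall x (r / 2)) =
        ∑ x ∈ S, μH[d] (B ∩ Metric.closedBall x (r / 2)) :=
      measure_biUnion_finset hdisj hmeas
    have hsub : (⋃ x ∈ S, B ∩ Metric.closedBall x (r / 2)) ⊆ B := by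
      simp only [Set.iUnion_subset_iff]
      exact fun x _ => Set.inter_subset_left
    calc (S.card : ℝ≥0∞) * e = ∑ _x ∈ S, e := by rw [Finset.sum_const, nsmul_eq_mul]
      _ ≤ ∑ x ∈ S, μH[d] (B ∩ Metric.closedBall x (r / 2)) :=
          Finset.sum_le_sum fun x hx => hlow x (hSB hx) (r / 2) (by linarith) (by linarith)
      _ = μH[d] (⋃ x ∈ S, B ∩ Metric.closedBall x (r / 2)) := hsum.symm
      _ ≤ μH[d] B := measure_mono hsub
  -- cardinality bound
  have hcard : ∀ S : Finset (EuclideanSpace ℝ (Fin n)), ↑S ⊆ B →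
      ((S : Set (EuclideanSpace ℝ (Fin n))).Pairwise fun x y => r < dist x y) →
      S.card ≤ ⌈(μH[d] B / e).toReal⌉₊ := by
    intro S h1 h2
    have h3 : (S.card : ℝ≥0∞) ≤ μH[d] B / e :=
      (ENNReal.le_div_iff_mul_le (Or.inl hepos.ne') (Or.inl (by rw [he]; exact ENNReal.ofReal_ne_top))).2 (key S h1 h2)
    have h4 : μH[d] B / e ≠ ⊤ :=
      (ENNReal.div_lt_top hHB hepos.ne').ne
    have h5 : (S.card : ℝ) ≤ (μH[d] B / e).toReal := by
      have := ENNReal.toReal_mono h4 h3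
      simpa using this
    exact_mod_cast h5.trans (Nat.le_ceil _)
  -- take a maximal-cardinality separated set
  set cards : Set ℕ := {m | ∃ S : Finset (EuclideanSpace ℝ (Fin n)), ↑S ⊆ B ∧
      ((S : Set (EuclideanSpace ℝ (Fin n))).Pairwise fun x y => r < dist x y) ∧ S.card = m}
    with hcards
  have h0 : (0 : ℕ) ∈ cards := ⟨∅, by simp, by simp, by simp⟩
  have hbdd : BddAbove cards := by
    refine ⟨⌈(μH[d] B / e).toReal⌉₊, fun m hm => ?_⟩
    obtain ⟨S, h1, h2, h3⟩ := hm
    exact h3 ▸ hcard S h1 h2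
  obtain ⟨S, hSB, hsep, hScard⟩ := Nat.sSup_mem ⟨0, h0⟩ hbdd
  refine ⟨S, hSB, ?_, key S hSB hsep⟩
  intro b hb
  by_contra hcon
  push_neg at hcon
  have hbS : b ∉ S := by
    intro hbS
    have := hcon b hbS
    simp at this
    linarith
  have hsep' : ((insert b S : Finset (EuclideanSpace ℝ (Fin n))) :
      Set (EuclideanSpace ℝ (Fin n))).Pairwise fun x y => r < dist x y := by
    rw [Finset.coe_insert]
    refine Set.pairwise_insert.2 ⟨hsep, fun x hx _ => ⟨hcon x hx, by rw [dist_comm]; exact hcon x hx⟩⟩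
  have hmem : S.card + 1 ∈ cards := by
    refine ⟨insert b S, ?_, hsep', ?_⟩
    · rw [Finset.coe_insert]
      exact Set.insert_subset hb hSB
    · rw [Finset.card_insert_of_notMem hbS]
  have := le_csSup hbdd hmem
  omega

lemma nbhdVol {n : ℕ} {d : ℝ} (hd0 : 0 ≤ d) {B : Set (EuclideanSpace ℝ (Fin n))}
    (hBcomp : IsCompact B) (hBne : B.Nonempty) {c₁ : ℝ} (hc₁ : 0 < c₁)
    (hlow : ∀ x ∈ B, ∀ r : ℝ, 0 < r → r ≤ 1 →
      ENNReal.ofReal (c₁ * r ^ d) ≤ μH[d] (B ∩ Metric.closedBall x r))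
    (hHB : μH[d] B ≠ ⊤) :
    ∃ C : ℝ≥0∞, C ≠ ⊤ ∧ ∀ r : ℝ, 0 < r → r ≤ 1 →
      volume {y : EuclideanSpace ℝ (Fin n) | infDist y B ≤ r} ≤
        C * ENNReal.ofReal (r ^ ((n : ℝ) - d)) := by
  have hnetExists : ∀ {r : ℝ}, 0 < r → r ≤ 1 →
    ∃ S : Finset (EuclideanSpace ℝ (Fin n)), ↑S ⊆ B ∧
      (∀ b ∈ B, ∃ x ∈ S, dist b x ≤ r) ∧
      (S.card : ℝ≥0∞) * ENNReal.ofReal (c₁ * (r / 2) ^ d) ≤ μH[d] B :=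
    fun hr0 hr1 => netExists hBcomp.isClosed.measurableSet hc₁ hlow hHB hr0 hr1
  set v : ℝ≥0∞ := volume (Metric.ball (0 : EuclideanSpace ℝ (Fin n)) 1) with hv
  have hvne : v ≠ ⊤ := (Metric.isBounded_ball.measure_lt_top).ne
  refine ⟨μH[d] B * (ENNReal.ofReal c₁)⁻¹ * ENNReal.ofReal (2 ^ (d + (n : ℝ))) * v,
    by
      apply ENNReal.mul_ne_top
      apply ENNReal.mul_ne_top
      apply ENNReal.mul_ne_top hHB
      · simp [ENNReal.inv_ne_top, ENNReal.ofReal_pos.2 hc₁, (ENNReal.ofReal_pos.2 hc₁).ne']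
      · exact ENNReal.ofReal_ne_top
      · exact hvne, ?_⟩
  intro r hr0 hr1
  obtain ⟨S, hSB, hnet, hcard⟩ := hnetExists hr0 hr1
  set e : ℝ≥0∞ := ENNReal.ofReal (c₁ * (r / 2) ^ d) with he
  have hepos : 0 < e := ENNReal.ofReal_pos.2 (by positivity)
  have hene : e ≠ ⊤ := ENNReal.ofReal_ne_top
  -- cover of the neighborhood
  have hcover : {y : EuclideanSpace ℝ (Fin n) | infDist y B ≤ r} ⊆
      ⋃ x ∈ S, Metric.closedBall x (2 * r) := by
    intro y hy
    obtain ⟨b, hbB, hbd⟩ := hBcomp.exists_infDist_eq_dist hBne y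
    have hyb : dist y b ≤ r := by rw [← hbd]; exact hy
    obtain ⟨x, hxS, hbx⟩ := hnet b hbB
    refine Set.mem_iUnion₂.2 ⟨x, hxS, ?_⟩
    have : dist y x ≤ dist y b + dist b x := dist_triangle _ _ _
    simp only [Metric.mem_closedBall]
    linarith
  have hballvol : ∀ x : EuclideanSpace ℝ (Fin n),
      volume (Metric.closedBall x (2 * r)) = ENNReal.ofReal ((2 * r) ^ n) * v := by
    intro x
    rw [Measure.addHaar_closedBall volume x (by linarith)]
    congr 2
    exact congrArg _ finrank_euclideanSpace_fin
  have hvol1 : volume {y : EuclideanSpace ℝ (Fin n) | infDist y B ≤ r} ≤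
      (S.card : ℝ≥0∞) * (ENNReal.ofReal ((2 * r) ^ n) * v) := by
    calc volume {y : EuclideanSpace ℝ (Fin n) | infDist y B ≤ r}
        ≤ volume (⋃ x ∈ S, Metric.closedBall x (2 * r)) := measure_mono hcover
      _ ≤ ∑ x ∈ S, volume (Metric.closedBall x (2 * r)) := measure_biUnion_finset_le _ _
      _ = (S.card : ℝ≥0∞) * (ENNReal.ofReal ((2 * r) ^ n) * v) := by
          simp only [hballvol, Finset.sum_const, nsmul_eq_mul]
  have hcard' : (S.card : ℝ≥0∞) ≤ μH[d] B * e⁻¹ := by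
    have h := (ENNReal.le_div_iff_mul_le (Or.inl hepos.ne') (Or.inl hene)).2 hcard
    rwa [div_eq_mul_inv] at h
  -- key real computation
  have hreal : (c₁ * (r / 2) ^ d)⁻¹ * (2 * r) ^ n =
      c₁⁻¹ * (2 ^ (d + (n : ℝ)) * r ^ ((n : ℝ) - d)) := by
    have h1 : ((2 : ℝ) * r) ^ n = 2 ^ (n : ℝ) * r ^ ((n : ℝ)) := by
      rw [mul_pow, ← Real.rpow_natCast 2 n, ← Real.rpow_natCast r n]
    have h2 : ((r / 2 : ℝ) ^ d)⁻¹ = r ^ (-d) * 2 ^ d := by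
      rw [div_eq_mul_inv, Real.mul_rpow hr0.le (by positivity), mul_inv,
        ← Real.rpow_neg hr0.le, Real.inv_rpow (by norm_num : (0:ℝ) ≤ 2), inv_inv]
    rw [mul_inv, h1, h2, Real.rpow_add (by norm_num : (0:ℝ) < 2) d n,
      show ((n:ℝ) - d) = (n:ℝ) + (-d) from by ring, Real.rpow_add hr0]
    ring
  have hkey : e⁻¹ * ENNReal.ofReal ((2 * r) ^ n) =
      (ENNReal.ofReal c₁)⁻¹ * ENNReal.ofReal (2 ^ (d + (n : ℝ))) *
        ENNReal.ofReal (r ^ ((n : ℝ) - d)) := by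
    rw [he, ← ENNReal.ofReal_inv_of_pos (by positivity),
      ← ENNReal.ofReal_mul (by positivity), hreal,
      ENNReal.ofReal_mul (by positivity), ENNReal.ofReal_mul (by positivity),
      ENNReal.ofReal_inv_of_pos hc₁]
    ring
  calc volume {y : EuclideanSpace ℝ (Fin n) | infDist y B ≤ r}
      ≤ (S.card : ℝ≥0∞) * (ENNReal.ofReal ((2 * r) ^ n) * v) := hvol1
    _ ≤ (μH[d] B * e⁻¹) * (ENNReal.ofReal ((2 * r) ^ n) * v) := mul_le_mul_left hcard' _
    _ = μH[d] B * (e⁻¹ * ENNReal.ofReal ((2 * r) ^ n)) * v := by ring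
    _ = μH[d] B * (ENNReal.ofReal c₁)⁻¹ * ENNReal.ofReal (2 ^ (d + (n : ℝ))) * v *
        ENNReal.ofReal (r ^ ((n : ℝ) - d)) := by rw [hkey]; ring

/-- Let A ⊆ ℝⁿ be a non-empty bounded measurable set whose
boundary ∂A is contained in a compact d-set for some 0 ≤ d < n. Then for every
t with 0 ≤ t < n − d, the integral ∫_A dist(y,∂A)^{−t} dy is finite. (The power
of the distance is taken in ℝ≥0∞, so that 0^{−t} = ∞ for t > 0 and 0^0 = 1.) -/
theorem statement15
    (n : ℕ) (hn : 1 ≤ n)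
    (A : Set (EuclideanSpace ℝ (Fin n)))
    (hAne : A.Nonempty) (hAbdd : Bornology.IsBounded A) (hAmeas : MeasurableSet A)
    (d : ℝ) (hd0 : 0 ≤ d) (hdn : d < n)
    (B : Set (EuclideanSpace ℝ (Fin n)))
    (hBcomp : IsCompact B) (hsub : frontier A ⊆ B)
    (hdset : ∃ c₁ c₂ : ℝ, 0 < c₁ ∧ c₁ ≤ c₂ ∧
      ∀ x ∈ B, ∀ r : ℝ, 0 < r → r ≤ 1 →
        ENNReal.ofReal (c₁ * r ^ d) ≤ μH[d] (B ∩ Metric.closedBall x r) ∧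
        μH[d] (B ∩ Metric.closedBall x r) ≤ ENNReal.ofReal (c₂ * r ^ d)) :
    ∀ t : ℝ, 0 ≤ t → t < (n : ℝ) - d →
      (∫⁻ y in A, ENNReal.ofReal (Metric.infDist y (frontier A)) ^ (-t)) < ⊤ := by
  intro t ht0 hts
  obtain ⟨c₁, c₂, hc₁, hc₁₂, hds⟩ := hdset
  haveI : Nonempty (Fin n) := ⟨⟨0, hn⟩⟩
  -- the frontier is nonempty
  have hFne : (frontier A).Nonempty := by
    rw [Set.nonempty_iff_ne_empty]
    intro h
    rcases frontier_eq_empty_iff.1 h with h' | h'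
    · exact hAne.ne_empty h'
    · rw [h'] at hAbdd
      have h2 : CompactSpace (EuclideanSpace ℝ (Fin n)) :=
        compactSpace_iff_isBounded_univ.2 hAbdd
      haveI := NormedSpace.noncompactSpace ℝ (EuclideanSpace ℝ (Fin n))
      exact (not_compactSpace_iff.2 inferInstance) h2
  have hBne : B.Nonempty := hFne.mono hsub
  have hHB : μH[d] B < ⊤ := hausFin hBcomp (fun x hx => (hds x hx 1 one_pos le_rfl).2)
  obtain ⟨C, hCne, hC⟩ := nbhdVol hd0 hBcomp hBne hc₁
    (fun x hx r h1 h2 => (hds x hx r h1 h2).1) hHB.ne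
  set sx : ℝ := (n : ℝ) - d with hsx
  have hs0 : 0 < sx := by simp only [hsx]; linarith
  have hμA : volume A < ⊤ := hAbdd.measure_lt_top
  -- the boundary has volume zero
  have hBnull : volume B = 0 := by
    have hhalf : ∀ k : ℕ, ((1/2 : ℝ) ^ k) ^ sx = ((1/2 : ℝ) ^ sx) ^ k := by
      intro k
      rw [← Real.rpow_natCast (1/2 : ℝ) k, ← Real.rpow_mul (by norm_num), mul_comm,
        Real.rpow_mul (by norm_num), Real.rpow_natCast]
    have hmono : ∀ k : ℕ, volume B ≤
        C * ENNReal.ofReal ((1/2 : ℝ) ^ sx) ^ k := by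
      intro k
      have h1 : B ⊆ {y : EuclideanSpace ℝ (Fin n) | infDist y B ≤ (1/2 : ℝ) ^ k} := by
        intro y hy
        simp only [Set.mem_setOf_eq, infDist_zero_of_mem hy]
        positivity
      calc volume B ≤ volume {y : EuclideanSpace ℝ (Fin n) | infDist y B ≤ (1/2 : ℝ) ^ k} :=
            measure_mono h1
        _ ≤ C * ENNReal.ofReal (((1/2 : ℝ) ^ k) ^ sx) :=
            hC _ (by positivity) (pow_le_one₀ (by norm_num) (by norm_num))
        _ = C * ENNReal.ofReal ((1/2 : ℝ) ^ sx) ^ k := by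
            rw [hhalf k, ENNReal.ofReal_pow (Real.rpow_nonneg (by norm_num) _)]
    have hq1 : ENNReal.ofReal ((1/2 : ℝ) ^ sx) < 1 := by
      rw [← ENNReal.ofReal_one]
      exact ENNReal.ofReal_lt_ofReal_iff_of_nonneg (Real.rpow_nonneg (by norm_num) _) |>.2
        (Real.rpow_lt_one (by norm_num) (by norm_num) hs0)
    have htend : Filter.Tendsto (fun k : ℕ => C * ENNReal.ofReal ((1/2 : ℝ) ^ sx) ^ k)
        Filter.atTop (nhds 0) := by
      have := ENNReal.Tendsto.const_mul (a := C)
        (ENNReal.tendsto_pow_atTop_nhds_zero_of_lt_one hq1) (Or.inr hCne)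
      simpa using this
    have := ge_of_tendsto' htend hmono
    exact le_antisymm this zero_le
  -- comparison of distances
  have hFB : ∀ y : EuclideanSpace ℝ (Fin n), infDist y B ≤ infDist y (frontier A) :=
    fun y => infDist_le_infDist_of_subset hsub hFne
  -- pointwise bound
  have hbound : ∀ (a : ℝ), 0 < a → ∀ y : EuclideanSpace ℝ (Fin n),
      a ≤ infDist y (frontier A) →
      ENNReal.ofReal (infDist y (frontier A)) ^ (-t) ≤ ENNReal.ofReal (a ^ (-t)) := by
    intro a ha y hy
    rw [← ENNReal.ofReal_rpow_of_pos ha, ENNReal.rpow_neg, ENNReal.rpow_neg]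
    exact ENNReal.inv_le_inv.2 (ENNReal.rpow_le_rpow (ENNReal.ofReal_le_ofReal hy) ht0)
  -- the shells
  set T : Set (EuclideanSpace ℝ (Fin n)) :=
    A ∩ {y | (1/2 : ℝ) < infDist y (frontier A)} with hT
  set S : ℕ → Set (EuclideanSpace ℝ (Fin n)) := fun k =>
    A ∩ {y | (1/2 : ℝ) ^ (k+2) < infDist y (frontier A) ∧
      infDist y (frontier A) ≤ (1/2 : ℝ) ^ (k+1)} with hS
  -- coverage
  have hcover : A ⊆ T ∪ ((⋃ k, S k) ∪ (A ∩ frontier A)) := by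
    intro y hy
    rcases lt_or_ge (1/2 : ℝ) (infDist y (frontier A)) with h | h
    · exact Or.inl ⟨hy, h⟩
    rcases (infDist_nonneg (s := frontier A) (x := y)).lt_or_eq with h0 | h0
    · -- find the shell
      have hex : ∃ m : ℕ, (1/2 : ℝ) ^ m < infDist y (frontier A) :=
        exists_pow_lt_of_lt_one h0 (by norm_num)
      classical
      obtain ⟨m₀, hspec, hmin⟩ : ∃ m : ℕ, ((1/2 : ℝ) ^ m < infDist y (frontier A)) ∧
          ∀ j < m, ¬ ((1/2 : ℝ) ^ j < infDist y (frontier A)) :=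
        ⟨Nat.find hex, Nat.find_spec hex, fun j hj => Nat.find_min hex hj⟩
      have hm2 : 2 ≤ m₀ := by
        by_contra hcon
        push_neg at hcon
        interval_cases m₀ <;> norm_num at hspec <;> linarith
      obtain ⟨k, hk⟩ : ∃ k, m₀ = k + 2 := ⟨m₀ - 2, by omega⟩
      refine Or.inr (Or.inl (Set.mem_iUnion.2 ⟨k, hy, ?_, ?_⟩))
      · rw [← hk]; exact hspec
      · have := hmin (k+1) (by omega)
        linarith [not_lt.1 this]
    · exact Or.inr (Or.inr ⟨hy, (IsClosed.mem_iff_infDist_zero isClosed_frontier hFne).2 h0.symm⟩)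
  -- bound on T
  have hTbound : (∫⁻ y in T, ENNReal.ofReal (infDist y (frontier A)) ^ (-t)) < ⊤ := by
    have h1 : (∫⁻ y in T, ENNReal.ofReal (infDist y (frontier A)) ^ (-t)) ≤
        ∫⁻ _y in T, ENNReal.ofReal ((1/2 : ℝ) ^ (-t)) := by
      refine setLIntegral_mono measurable_const fun y hy => ?_
      exact hbound (1/2) (by norm_num) y hy.2.le
    rw [setLIntegral_const] at h1
    refine lt_of_le_of_lt h1 (ENNReal.mul_lt_top ENNReal.ofReal_lt_top ?_)
    exact lt_of_le_of_lt (measure_mono Set.inter_subset_left) hμA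
  -- bound on shell k
  have hSbound : ∀ k : ℕ, (∫⁻ y in S k, ENNReal.ofReal (infDist y (frontier A)) ^ (-t)) ≤
      ENNReal.ofReal (((1/2 : ℝ) ^ (k+2)) ^ (-t)) *
        (C * ENNReal.ofReal (((1/2 : ℝ) ^ (k+1)) ^ sx)) := by
    intro k
    have h1 : (∫⁻ y in S k, ENNReal.ofReal (infDist y (frontier A)) ^ (-t)) ≤
        ∫⁻ _y in S k, ENNReal.ofReal (((1/2 : ℝ) ^ (k+2)) ^ (-t)) := by
      refine setLIntegral_mono measurable_const fun y hy => ?_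
      exact hbound ((1/2) ^ (k+2)) (by positivity) y hy.2.1.le
    rw [setLIntegral_const] at h1
    refine h1.trans (mul_le_mul_right ?_ _)
    have h2 : S k ⊆ {y : EuclideanSpace ℝ (Fin n) | infDist y B ≤ (1/2 : ℝ) ^ (k+1)} :=
      fun y hy => le_trans (hFB y) hy.2.2
    exact le_trans (measure_mono h2)
      (hC _ (by positivity) (pow_le_one₀ (by norm_num) (by norm_num)))
  -- sum over the shells
  have hhalfpow : ∀ m : ℕ, ((1/2 : ℝ) ^ m) = (2 : ℝ) ^ (-(m : ℝ)) := by
    intro m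
    rw [one_div, ← Real.rpow_natCast (2⁻¹ : ℝ) m, Real.inv_rpow (by norm_num),
      ← Real.rpow_neg (by norm_num)]
  have hterm : ∀ k : ℕ, (((1/2 : ℝ) ^ (k+2)) ^ (-t)) * (((1/2 : ℝ) ^ (k+1)) ^ sx) =
      2 ^ (2*t - sx) * ((2 : ℝ) ^ (t - sx)) ^ k := by
    intro k
    rw [hhalfpow (k+2), hhalfpow (k+1), ← Real.rpow_natCast ((2:ℝ) ^ (t - sx)) k,
      ← Real.rpow_mul (by norm_num), ← Real.rpow_mul (by norm_num),
      ← Real.rpow_mul (by norm_num), ← Real.rpow_add (by norm_num),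
      ← Real.rpow_add (by norm_num)]
    congr 1
    push_cast
    ring
  have hq1 : ENNReal.ofReal ((2 : ℝ) ^ (t - sx)) < 1 := by
    rw [← ENNReal.ofReal_one]
    exact ENNReal.ofReal_lt_ofReal_iff_of_nonneg (Real.rpow_nonneg (by norm_num) _) |>.2
      (Real.rpow_lt_one_of_one_lt_of_neg (by norm_num) (by linarith))
  have hsum : (∑' k : ℕ, ENNReal.ofReal (((1/2 : ℝ) ^ (k+2)) ^ (-t)) *
      (C * ENNReal.ofReal (((1/2 : ℝ) ^ (k+1)) ^ sx))) < ⊤ := by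
    have heq : ∀ k : ℕ, ENNReal.ofReal (((1/2 : ℝ) ^ (k+2)) ^ (-t)) *
        (C * ENNReal.ofReal (((1/2 : ℝ) ^ (k+1)) ^ sx)) =
        C * ENNReal.ofReal (2 ^ (2*t - sx)) *
          ENNReal.ofReal ((2 : ℝ) ^ (t - sx)) ^ k := by
      intro k
      rw [mul_comm C _, ← mul_assoc, ← ENNReal.ofReal_mul (Real.rpow_nonneg (by positivity) _),
        hterm k, ENNReal.ofReal_mul (Real.rpow_nonneg (by norm_num) _),
        ENNReal.ofReal_pow (Real.rpow_nonneg (by norm_num) _)]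
      ring
    simp only [heq]
    rw [ENNReal.tsum_mul_left, ENNReal.tsum_geometric]
    refine ENNReal.mul_lt_top (ENNReal.mul_lt_top hCne.lt_top ENNReal.ofReal_lt_top) ?_
    exact ENNReal.inv_lt_top.2 (tsub_pos_of_lt hq1)
  -- conclusion
  have hUnion := (lintegral_iUnion_le S
    (fun y => ENNReal.ofReal (infDist y (frontier A)) ^ (-t))).trans
    (ENNReal.tsum_le_tsum hSbound)
  have hFzero : (∫⁻ y in A ∩ frontier A,
      ENNReal.ofReal (infDist y (frontier A)) ^ (-t)) = 0 :=
    setLIntegral_measure_zero _ _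
      (measure_mono_null (Set.inter_subset_right.trans hsub) hBnull)
  calc (∫⁻ y in A, ENNReal.ofReal (infDist y (frontier A)) ^ (-t))
      ≤ ∫⁻ y in T ∪ ((⋃ k, S k) ∪ (A ∩ frontier A)),
          ENNReal.ofReal (infDist y (frontier A)) ^ (-t) := lintegral_mono_set hcover
    _ ≤ (∫⁻ y in T, ENNReal.ofReal (infDist y (frontier A)) ^ (-t)) +
        ∫⁻ y in (⋃ k, S k) ∪ (A ∩ frontier A),
          ENNReal.ofReal (infDist y (frontier A)) ^ (-t) := lintegral_union_le _ _ _
    _ ≤ (∫⁻ y in T, ENNReal.ofReal (infDist y (frontier A)) ^ (-t)) +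
        ((∫⁻ y in ⋃ k, S k, ENNReal.ofReal (infDist y (frontier A)) ^ (-t)) +
          ∫⁻ y in A ∩ frontier A, ENNReal.ofReal (infDist y (frontier A)) ^ (-t)) :=
        add_le_add le_rfl (lintegral_union_le _ _ _)
    _ < ⊤ := by
        rw [hFzero, add_zero]
        exact ENNReal.add_lt_top.2 ⟨hTbound, lt_of_le_of_lt hUnion hsum⟩
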